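/- Consider the FGM construction with strictly positive marginals as in Theorem 3.2, with I : Ω → {0,1}^d having symmetric Bernoulli marginals, and define for every subset J ⊆ {1,...,d} with |J| ≥ 2 the parameter θ_J = (−2)^{|J|} E[∏_{j∈J}(I_j − 1/2)]. Fix m ∈ ℕ≥1 with all m-th moments finite, write E[X_k^j] for the j-th moment of F_k and μ^{(j)}_{k,[2]} = E[(X^[2]_k)^j]. Then E[S^m] = Σ_{(j_1,...,j_d)∈ℕ^d : j_1+···+j_d = m} (m!/(j_1!···j_d!)) · (∏_{k=1}^d E[X_k^{j_k}]) · [1 + Σ_{J⊆{1,...,d}, |J|≥2} θ_J ∏_{n∈J}(1 − μ^{(j_n)}_{n,[2]}/E[X_n^{j_n}])]. -/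

import Mathlib

open MeasureTheory ProbabilityTheory

/-- Codomains of the `2d+1` random elements in the FGM construction. -/
def fgmType (d : ℕ) : Option (Fin d × Fin 2) → Type
  | none => Fin d → Fin 2
  | some _ => ℝ

instance fgmTypeMeasurableSpace (d : ℕ) (o : Option (Fin d × Fin 2)) :
    MeasurableSpace (fgmType d o) := by
  cases o with
  | none => exact (inferInstance : MeasurableSpace (Fin d → Fin 2))
  | some p => exact (inferInstance : MeasurableSpace ℝ)

/-- The family consisting of the Bernoulli random vector `I` together with the `2d`
order-statistic components `X j k` (`j = 0`: minimum, `j = 1`: maximum). -/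
def fgmFamily {Ω : Type*} (d : ℕ) (I : Ω → Fin d → Fin 2)
    (X : Fin 2 → Fin d → Ω → ℝ) : (o : Option (Fin d × Fin 2)) → Ω → fgmType d o
  | none => I
  | some p => X p.2 p.1

section auxiliary

variable {Ω : Type*} [MeasurableSpace Ω] {μ : Measure Ω}


lemma my_iIndep_precomp {ι ι' : Type*} {n : ι → MeasurableSpace Ω}
    (g : ι' → ι) (hg : Function.Injective g) (h : iIndep n μ) :
    iIndep (fun i => n (g i)) μ := by
  rw [iIndep_iff] at h ⊢
  intro S sets hsets
  classical
  set sets' : ι → Set Ω := fun i => ⋂ i' ∈ S.filter (fun i' => g i' = i), sets i' with hdef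
  have key : ∀ i' ∈ S, sets' (g i') = sets i' := by
    intro i' hi'
    have hfilter : S.filter (fun x => g x = g i') = {i'} := by
      ext x
      simp only [Finset.mem_filter, Finset.mem_singleton]
      constructor
      · rintro ⟨-, hx⟩; exact hg hx
      · rintro rfl; exact ⟨hi', rfl⟩
    show (⋂ i'' ∈ S.filter (fun x => g x = g i'), sets i'') = sets i'
    rw [hfilter]
    simp
  have hmeas : ∀ i ∈ S.image g, MeasurableSet[n i] (sets' i) := by
    intro i hi
    obtain ⟨i', hi', rfl⟩ := Finset.mem_image.mp hi
    rw [key i' hi']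
    exact hsets i' hi'
  have h' := h (S.image g) hmeas
  rw [Finset.set_biInter_finset_image, Finset.prod_image (fun x _ y _ hxy => hg hxy)] at h'
  rw [Set.iInter₂_congr key] at h'
  rw [h']
  exact Finset.prod_congr rfl fun i hi => congrArg μ (key i hi)

lemma my_iIndepFun_precomp {ι ι' : Type*} {κ : ι → Type*} {m : ∀ i, MeasurableSpace (κ i)}
    {f : ∀ i, Ω → κ i} (g : ι' → ι) (hg : Function.Injective g)
    (h : iIndepFun (m := m) f μ) : iIndepFun (m := fun i => m (g i)) (fun i => f (g i)) μ := by
  rw [iIndepFun_iff_iIndep] at h ⊢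
  exact my_iIndep_precomp g hg h

lemma my_indepFun_apply_prod {ι : Type*} [IsProbabilityMeasure μ] {κ : ι → Type*}
    {m : ∀ i, MeasurableSpace (κ i)} {f : ∀ i, Ω → κ i}
    (hIndep : iIndepFun (m := m) f μ) (hfm : ∀ i, Measurable (f i))
    (φ : ∀ i, κ i → ℝ) (hφ : ∀ i, Measurable (φ i)) {a : ι} {s : Finset ι} (has : a ∉ s) :
    IndepFun (fun ω => φ a (f a ω)) (fun ω => ∏ i ∈ s, φ i (f i ω)) μ := by
  classical
  have h2 := hIndep.indepFun_finset {a} s (by simpa using has) hfm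
  have hΦ : Measurable (fun v : (i : ({a} : Finset ι)) → κ i => φ a (v ⟨a, Finset.mem_singleton_self a⟩)) :=
    (hφ a).comp (measurable_pi_apply _)
  have hΨ : Measurable (fun v : (i : (s : Finset ι)) → κ i => ∏ i ∈ s.attach, φ i (v i)) :=
    Finset.measurable_prod _ fun i _ => (hφ i).comp (measurable_pi_apply _)
  have h3 := h2.comp hΦ hΨ
  have e1 : ((fun v : (i : ({a} : Finset ι)) → κ i => φ a (v ⟨a, Finset.mem_singleton_self a⟩)) ∘
      (fun ω (i : ({a} : Finset ι)) => f i ω)) = fun ω => φ a (f a ω) := rfl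
  have e2 : ((fun v : (i : (s : Finset ι)) → κ i => ∏ i ∈ s.attach, φ i (v i)) ∘
      (fun ω (i : (s : Finset ι)) => f i ω)) = fun ω => ∏ i ∈ s, φ i (f i ω) := by
    funext ω
    exact Finset.prod_attach s fun i => φ i (f i ω)
  rwa [e1, e2] at h3

lemma my_integral_indep_prod {ι : Type*} [IsProbabilityMeasure μ] {κ : ι → Type*}
    {m : ∀ i, MeasurableSpace (κ i)} {f : ∀ i, Ω → κ i}
    (hIndep : iIndepFun (m := m) f μ) (hfm : ∀ i, Measurable (f i))
    (φ : ∀ i, κ i → ℝ) (hφ : ∀ i, Measurable (φ i)) (s : Finset ι) :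
    ∫ ω, ∏ i ∈ s, φ i (f i ω) ∂μ = ∏ i ∈ s, ∫ ω, φ i (f i ω) ∂μ := by
  classical
  induction s using Finset.cons_induction with
  | empty => simp
  | cons a s has ih =>
    have hind := my_indepFun_apply_prod hIndep hfm φ hφ has
    have h1 : AEStronglyMeasurable (fun ω => φ a (f a ω)) μ :=
      ((hφ a).comp (hfm a)).aestronglyMeasurable
    have h2 : AEStronglyMeasurable (fun ω => ∏ i ∈ s, φ i (f i ω)) μ :=
      (Finset.measurable_prod s fun i _ => (hφ i).comp (hfm i)).aestronglyMeasurable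
    have h3 : ∫ ω, ∏ i ∈ Finset.cons a s has, φ i (f i ω) ∂μ
        = ∫ ω, φ a (f a ω) * ∏ i ∈ s, φ i (f i ω) ∂μ := by
      simp only [Finset.prod_cons]
    rw [h3, hind.integral_fun_mul_eq_mul_integral h1 h2, ih]
    exact (Finset.prod_cons (f := fun i => ∫ ω, φ i (f i ω) ∂μ) has).symm

lemma my_integrable_indep_prod {ι : Type*} [IsProbabilityMeasure μ] {κ : ι → Type*}
    {m : ∀ i, MeasurableSpace (κ i)} {f : ∀ i, Ω → κ i}
    (hIndep : iIndepFun (m := m) f μ) (hfm : ∀ i, Measurable (f i))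
    (φ : ∀ i, κ i → ℝ) (hφ : ∀ i, Measurable (φ i)) (s : Finset ι)
    (hint : ∀ i ∈ s, Integrable (fun ω => φ i (f i ω)) μ) :
    Integrable (fun ω => ∏ i ∈ s, φ i (f i ω)) μ := by
  classical
  induction s using Finset.cons_induction with
  | empty => simpa using integrable_const (c := (1:ℝ))
  | cons a s has ih =>
    have hind := my_indepFun_apply_prod hIndep hfm φ hφ has
    have h4 := hind.integrable_mul (hint a (Finset.mem_cons_self a s))
      (ih fun i hi => hint i (Finset.mem_cons_of_mem hi))
    have he : (fun ω => ∏ i ∈ Finset.cons a s has, φ i (f i ω))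
        = (fun ω => φ a (f a ω)) * fun ω => ∏ i ∈ s, φ i (f i ω) := by
      funext ω
      exact Finset.prod_cons has
    rw [he]
    exact h4

lemma my_integrable_comp_finite {α : Type*} [IsProbabilityMeasure μ] [Fintype α]
    [MeasurableSpace α] [MeasurableSingletonClass α]
    (g : α → ℝ) (f : Ω → α) (hf : Measurable f) :
    Integrable (fun ω => g (f ω)) μ := by
  refine (integrable_const (∑ a : α, ‖g a‖)).mono'
    ((measurable_of_finite g).comp hf).aestronglyMeasurable (ae_of_all _ fun ω => ?_)
  exact Finset.single_le_sum (fun a _ => norm_nonneg (g a)) (Finset.mem_univ (f ω))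

end auxiliary

def fgmEmb (d : ℕ) (c : Fin d → Fin 2) : Option (Fin d) → Option (Fin d × Fin 2) :=
  Option.map (fun k => (k, c k))

lemma fgmEmb_injective (d : ℕ) (c : Fin d → Fin 2) : Function.Injective (fgmEmb d c) :=
  Option.map_injective fun _ _ h => congrArg Prod.fst h

def fgmPhi (d : ℕ) (c : Fin d → Fin 2) (g : (Fin d → Fin 2) → ℝ) (ψ : Fin d → ℝ → ℝ) :
    (o : Option (Fin d)) → fgmType d (fgmEmb d c o) → ℝ
  | none => g
  | some k => ψ k

lemma fgm_factor {Ω : Type*} [MeasurableSpace Ω] (P : Measure Ω) [IsProbabilityMeasure P]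
    (d : ℕ) (I : Ω → Fin d → Fin 2) (X : Fin 2 → Fin d → Ω → ℝ)
    (hI : Measurable I) (hX : ∀ j k, Measurable (X j k))
    (hIndep : iIndepFun (fgmFamily d I X) P)
    (c : Fin d → Fin 2) (g : (Fin d → Fin 2) → ℝ) (ψ : Fin d → ℝ → ℝ)
    (hψ : ∀ k, Measurable (ψ k)) :
    ∫ ω, g (I ω) * ∏ k, ψ k (X (c k) k ω) ∂P
      = (∫ ω, g (I ω) ∂P) * ∏ k, ∫ ω, ψ k (X (c k) k ω) ∂P := by
  have hIndep' := my_iIndepFun_precomp (fgmEmb d c) (fgmEmb_injective d c) hIndep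
  have hfm : ∀ o : Option (Fin d), Measurable (fgmFamily d I X (fgmEmb d c o)) := by
    intro o; cases o with
    | none => exact hI
    | some k => exact hX (c k) k
  have hφ : ∀ o : Option (Fin d), Measurable (fgmPhi d c g ψ o) := by
    intro o; cases o with
    | none => exact measurable_of_finite g
    | some k => exact hψ k
  have h := my_integral_indep_prod hIndep' hfm (fgmPhi d c g ψ) hφ Finset.univ
  have e1 : (fun ω => ∏ o : Option (Fin d),
      fgmPhi d c g ψ o (fgmFamily d I X (fgmEmb d c o) ω))
      = fun ω => g (I ω) * ∏ k, ψ k (X (c k) k ω) := by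
    funext ω
    rw [Fintype.prod_option]
    rfl
  rw [e1] at h
  rw [h, Fintype.prod_option]
  rfl

lemma fgm_factor_integrable {Ω : Type*} [MeasurableSpace Ω] (P : Measure Ω)
    [IsProbabilityMeasure P]
    (d : ℕ) (I : Ω → Fin d → Fin 2) (X : Fin 2 → Fin d → Ω → ℝ)
    (hI : Measurable I) (hX : ∀ j k, Measurable (X j k))
    (hIndep : iIndepFun (fgmFamily d I X) P)
    (c : Fin d → Fin 2) (g : (Fin d → Fin 2) → ℝ) (ψ : Fin d → ℝ → ℝ)
    (hψ : ∀ k, Measurable (ψ k))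
    (hgint : Integrable (fun ω => g (I ω)) P)
    (hψint : ∀ k, Integrable (fun ω => ψ k (X (c k) k ω)) P) :
    Integrable (fun ω => g (I ω) * ∏ k, ψ k (X (c k) k ω)) P := by
  have hIndep' := my_iIndepFun_precomp (fgmEmb d c) (fgmEmb_injective d c) hIndep
  have hfm : ∀ o : Option (Fin d), Measurable (fgmFamily d I X (fgmEmb d c o)) := by
    intro o; cases o with
    | none => exact hI
    | some k => exact hX (c k) k
  have hφ : ∀ o : Option (Fin d), Measurable (fgmPhi d c g ψ o) := by
    intro o; cases o with
    | none => exact measurable_of_finite g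
    | some k => exact hψ k
  have h := my_integrable_indep_prod hIndep' hfm (fgmPhi d c g ψ) hφ Finset.univ ?_
  · have e1 : (fun ω => ∏ o : Option (Fin d),
        fgmPhi d c g ψ o (fgmFamily d I X (fgmEmb d c o) ω))
        = fun ω => g (I ω) * ∏ k, ψ k (X (c k) k ω) := by
      funext ω
      rw [Fintype.prod_option]
      rfl
    rwa [e1] at h
  · intro o _
    cases o with
    | none => exact hgint
    | some k => exact hψint k

/-- Corollary 3.3, the `A_2` form: the `m`-th moment of the aggregate
rv of the FGM construction under the natural FGM parametrization
`θ_J = (−2)^{|J|} E[∏_{j∈J}(I_j − 1/2)]`, for `I` with symmetric Bernoulli marginals. -/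
theorem fgm_aggregate_moments_natural {Ω : Type*} [MeasurableSpace Ω]
    (P : Measure Ω) [IsProbabilityMeasure P] (d : ℕ) (F : Fin d → ℝ → ℝ)
    (I : Ω → Fin d → Fin 2) (X : Fin 2 → Fin d → Ω → ℝ)
    (hI : Measurable I) (hX : ∀ j k, Measurable (X j k))
    (hpos : ∀ j k ω, 0 < X j k ω)
    (hIndep : iIndepFun (fgmFamily d I X) P)
    (hmarg : ∀ k : Fin d, P {ω | I ω k = 1} = 1 / 2)
    (hcdf_min : ∀ k x, (P {ω | X 0 k ω ≤ x}).toReal = 1 - (1 - F k x) ^ 2)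
    (hcdf_max : ∀ k x, (P {ω | X 1 k ω ≤ x}).toReal = (F k x) ^ 2)
    (θ : Finset (Fin d) → ℝ)
    (hθ : ∀ J : Finset (Fin d), 2 ≤ J.card →
      θ J = (-2 : ℝ) ^ J.card * ∫ ω, ∏ j ∈ J, (((I ω j : ℕ) : ℝ) - 1 / 2) ∂P)
    (m : ℕ) (hm : 1 ≤ m)
    (hint : ∀ j k, Integrable (fun ω => X j k ω ^ m) P)
    (EX : Fin d → ℕ → ℝ)
    (hEX : ∀ k j, EX k j
      = ((∫ ω, X 0 k ω ^ j ∂P) + ∫ ω, X 1 k ω ^ j ∂P) / 2) :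
    ∫ ω, (∑ k, ((1 - ((I ω k : ℕ) : ℝ)) * X 0 k ω + ((I ω k : ℕ) : ℝ) * X 1 k ω)) ^ m ∂P
      = ∑ j ∈ Finset.Nat.antidiagonalTuple d m,
          ((m.factorial : ℝ) / ∏ k, ((j k).factorial : ℝ))
            * (∏ k, EX k (j k))
            * (1 + ∑ J ∈ Finset.univ.filter (fun J : Finset (Fin d) => 2 ≤ J.card),
                θ J * ∏ n ∈ J, (1 - (∫ ω, X 1 n ω ^ (j n) ∂P) / EX n (j n))) := by
  classical
  set Y : Fin d → Ω → ℝ :=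
    fun k ω => (1 - ((I ω k : ℕ) : ℝ)) * X 0 k ω + ((I ω k : ℕ) : ℝ) * X 1 k ω with hYdef
  -- basic facts
  have hfin2 : ∀ v : Fin 2, v = 0 ∨ v = 1 := by decide
  have hI01 : ∀ (ω : Ω) (k : Fin d), ((I ω k : ℕ) : ℝ) = 0 ∨ ((I ω k : ℕ) : ℝ) = 1 := by
    intro ω k
    rcases hfin2 (I ω k) with h | h
    · left; rw [h]; norm_num
    · right; rw [h]; norm_num
  have hXint : ∀ (c : Fin 2) (k : Fin d) (n : ℕ), n ≤ m →
      Integrable (fun ω => X c k ω ^ n) P := by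
    intro c k n hn
    refine ((integrable_const (1 : ℝ)).add (hint c k)).mono'
      ((hX c k).pow_const n).aestronglyMeasurable (ae_of_all _ fun ω => ?_)
    simp only [Pi.add_apply]
    have h0 := (hpos c k ω).le
    rw [Real.norm_of_nonneg (pow_nonneg h0 n)]
    rcases le_total (X c k ω) 1 with h | h
    · have h1 : X c k ω ^ n ≤ 1 := pow_le_one₀ h0 h
      have h2 : (0:ℝ) ≤ X c k ω ^ m := pow_nonneg h0 m
      linarith
    · have h1 : X c k ω ^ n ≤ X c k ω ^ m := pow_le_pow_right₀ h hn
      linarith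
  have hXpos : ∀ (c : Fin 2) (k : Fin d) (n : ℕ), n ≤ m →
      0 < ∫ ω, X c k ω ^ n ∂P := by
    intro c k n hn
    rw [integral_pos_iff_support_of_nonneg_ae
      (ae_of_all _ fun ω => pow_nonneg (hpos c k ω).le n) (hXint c k n hn)]
    have hs : Function.support (fun ω => X c k ω ^ n) = Set.univ := by
      ext ω
      simp only [Function.mem_support, Set.mem_univ, iff_true]
      exact (pow_pos (hpos c k ω) n).ne'
    rw [hs]
    simp
  have hIint : ∀ g : (Fin d → Fin 2) → ℝ, Integrable (fun ω => g (I ω)) P :=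
    fun g => my_integrable_comp_finite g I hI
  have hEI : ∀ k : Fin d, ∫ ω, ((I ω k : ℕ) : ℝ) ∂P = 1 / 2 := by
    intro k
    have hset : MeasurableSet {ω | I ω k = 1} := by
      have : {ω | I ω k = 1} = (fun ω => I ω k) ⁻¹' {1} := rfl
      rw [this]
      exact ((measurable_pi_apply k).comp hI) (measurableSet_singleton 1)
    have he : (fun ω => ((I ω k : ℕ) : ℝ))
        = Set.indicator {ω | I ω k = 1} (fun _ => (1 : ℝ)) := by
      funext ω
      by_cases h : I ω k = 1
      · simp only [Set.indicator, Set.mem_setOf_eq, h, if_true]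
        norm_num
      · have h0 : I ω k = 0 := by
          rcases hfin2 (I ω k) with h' | h'
          · exact h'
          · exact absurd h' h
        simp only [Set.indicator, Set.mem_setOf_eq, h, if_false, h0]
        norm_num
    rw [he, integral_indicator_const _ hset, measureReal_def, hmarg k]
    norm_num [ENNReal.toReal_div]
  -- the key computation for a fixed multi-index j
  have key : ∀ j : Fin d → ℕ, (∀ k, j k ≤ m) →
      Integrable (fun ω => ∏ k, Y k ω ^ j k) P ∧
      ∫ ω, ∏ k, Y k ω ^ j k ∂P
        = (∏ k, EX k (j k))
            * (1 + ∑ J ∈ Finset.univ.filter (fun J : Finset (Fin d) => 2 ≤ J.card),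
                θ J * ∏ n ∈ J, (1 - (∫ ω, X 1 n ω ^ (j n) ∂P) / EX n (j n))) := by
    intro j hj
    have hA : ∀ k, 0 < ∫ ω, X 0 k ω ^ j k ∂P := fun k => hXpos 0 k (j k) (hj k)
    have hB : ∀ k, 0 < ∫ ω, X 1 k ω ^ j k ∂P := fun k => hXpos 1 k (j k) (hj k)
    have hEpos : ∀ k, 0 < EX k (j k) := by
      intro k
      rw [hEX k (j k)]
      have := hA k; have := hB k
      linarith
    -- pointwise expansion over subsets
    have exp1 : ∀ ω, ∏ k, Y k ω ^ j k
        = ∑ J : Finset (Fin d),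
            ((∏ n ∈ J, ((I ω n : ℕ) : ℝ)) * ∏ n ∈ Jᶜ, (1 - ((I ω n : ℕ) : ℝ)))
              * ∏ k, X ((fun k => if k ∈ J then 1 else 0) k) k ω ^ j k := by
      intro ω
      have hYpow : ∀ k, Y k ω ^ j k
          = ((I ω k : ℕ) : ℝ) * X 1 k ω ^ j k
            + (1 - ((I ω k : ℕ) : ℝ)) * X 0 k ω ^ j k := by
        intro k
        rcases hI01 ω k with h | h <;> simp [hYdef, h]
      calc ∏ k, Y k ω ^ j k
          = ∏ k, (((I ω k : ℕ) : ℝ) * X 1 k ω ^ j k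
              + (1 - ((I ω k : ℕ) : ℝ)) * X 0 k ω ^ j k) :=
            Finset.prod_congr rfl fun k _ => hYpow k
        _ = ∑ J : Finset (Fin d),
              (∏ n ∈ J, ((I ω n : ℕ) : ℝ) * X 1 n ω ^ j n)
                * ∏ n ∈ Jᶜ, (1 - ((I ω n : ℕ) : ℝ)) * X 0 n ω ^ j n :=
            Fintype.prod_add _ _
        _ = _ := by
            refine Finset.sum_congr rfl fun J _ => ?_
            rw [Finset.prod_mul_distrib, Finset.prod_mul_distrib]
            have hsplit : (∏ k, X ((fun k => if k ∈ J then 1 else 0) k) k ω ^ j k)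
                = (∏ n ∈ J, X 1 n ω ^ j n) * ∏ n ∈ Jᶜ, X 0 n ω ^ j n := by
              rw [← Finset.prod_mul_prod_compl J
                (fun k => X ((fun k => if k ∈ J then 1 else 0) k) k ω ^ j k)]
              congr 1
              · exact Finset.prod_congr rfl fun n hn => by simp [hn]
              · exact Finset.prod_congr rfl fun n hn => by
                  simp [Finset.mem_compl.mp hn]
            rw [hsplit]
            ring
    -- integrability of each term
    have int_term : ∀ J : Finset (Fin d),
        Integrable (fun ω =>
          ((∏ n ∈ J, ((I ω n : ℕ) : ℝ)) * ∏ n ∈ Jᶜ, (1 - ((I ω n : ℕ) : ℝ)))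
            * ∏ k, X ((fun k => if k ∈ J then 1 else 0) k) k ω ^ j k) P := by
      intro J
      exact fgm_factor_integrable P d I X hI hX hIndep
        (fun k => if k ∈ J then 1 else 0)
        (fun v => (∏ n ∈ J, ((v n : ℕ) : ℝ)) * ∏ n ∈ Jᶜ, (1 - ((v n : ℕ) : ℝ)))
        (fun k x => x ^ j k)
        (fun k => measurable_id.pow_const (j k))
        (hIint (fun v => (∏ n ∈ J, ((v n : ℕ) : ℝ)) * ∏ n ∈ Jᶜ, (1 - ((v n : ℕ) : ℝ))))
        (fun k => hXint _ k (j k) (hj k))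
    have hintprod : Integrable (fun ω => ∏ k, Y k ω ^ j k) P := by
      rw [show (fun ω => ∏ k, Y k ω ^ j k)
          = fun ω => ∑ J : Finset (Fin d),
            ((∏ n ∈ J, ((I ω n : ℕ) : ℝ)) * ∏ n ∈ Jᶜ, (1 - ((I ω n : ℕ) : ℝ)))
              * ∏ k, X ((fun k => if k ∈ J then 1 else 0) k) k ω ^ j k
        from funext exp1]
      exact integrable_finset_sum _ fun J _ => int_term J
    refine ⟨hintprod, ?_⟩
    -- step 2 : integrate and factor
    have step2 : ∫ ω, ∏ k, Y k ω ^ j k ∂P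
        = ∑ J : Finset (Fin d),
            (∫ ω, (∏ n ∈ J, ((I ω n : ℕ) : ℝ)) * ∏ n ∈ Jᶜ, (1 - ((I ω n : ℕ) : ℝ)) ∂P)
              * ((∏ n ∈ J, ∫ ω, X 1 n ω ^ j n ∂P) * ∏ n ∈ Jᶜ, ∫ ω, X 0 n ω ^ j n ∂P) := by
      rw [show (fun ω => ∏ k, Y k ω ^ j k)
          = fun ω => ∑ J : Finset (Fin d),
            ((∏ n ∈ J, ((I ω n : ℕ) : ℝ)) * ∏ n ∈ Jᶜ, (1 - ((I ω n : ℕ) : ℝ)))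
              * ∏ k, X ((fun k => if k ∈ J then 1 else 0) k) k ω ^ j k
        from funext exp1]
      rw [integral_finset_sum _ fun J _ => int_term J]
      refine Finset.sum_congr rfl fun J _ => ?_
      rw [fgm_factor P d I X hI hX hIndep
        (fun k => if k ∈ J then 1 else 0)
        (fun v => (∏ n ∈ J, ((v n : ℕ) : ℝ)) * ∏ n ∈ Jᶜ, (1 - ((v n : ℕ) : ℝ)))
        (fun k x => x ^ j k)
        (fun k => measurable_id.pow_const (j k))]
      congr 1
      rw [← Finset.prod_mul_prod_compl J
        (fun k => ∫ ω, X ((fun k => if k ∈ J then 1 else 0) k) k ω ^ j k ∂P)]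
      congr 1
      · exact Finset.prod_congr rfl fun n hn => by simp [hn]
      · exact Finset.prod_congr rfl fun n hn => by simp [Finset.mem_compl.mp hn]
    -- step 3 : recombine the Bernoulli expectations
    have step3 : ∑ J : Finset (Fin d),
            (∫ ω, (∏ n ∈ J, ((I ω n : ℕ) : ℝ)) * ∏ n ∈ Jᶜ, (1 - ((I ω n : ℕ) : ℝ)) ∂P)
              * ((∏ n ∈ J, ∫ ω, X 1 n ω ^ j n ∂P) * ∏ n ∈ Jᶜ, ∫ ω, X 0 n ω ^ j n ∂P)
        = ∑ J : Finset (Fin d),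
            (∫ ω, ∏ n ∈ J, (((I ω n : ℕ) : ℝ) - 1 / 2) ∂P)
              * ((∏ n ∈ J, ((∫ ω, X 1 n ω ^ j n ∂P) - ∫ ω, X 0 n ω ^ j n ∂P))
                  * ∏ n ∈ Jᶜ, EX n (j n)) := by
      have l1 : ∀ J : Finset (Fin d),
          (∫ ω, (∏ n ∈ J, ((I ω n : ℕ) : ℝ)) * ∏ n ∈ Jᶜ, (1 - ((I ω n : ℕ) : ℝ)) ∂P)
            * ((∏ n ∈ J, ∫ ω, X 1 n ω ^ j n ∂P) * ∏ n ∈ Jᶜ, ∫ ω, X 0 n ω ^ j n ∂P)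
          = ∫ ω, ((∏ n ∈ J, ((I ω n : ℕ) : ℝ)) * ∏ n ∈ Jᶜ, (1 - ((I ω n : ℕ) : ℝ)))
              * ((∏ n ∈ J, ∫ ω, X 1 n ω ^ j n ∂P) * ∏ n ∈ Jᶜ, ∫ ω, X 0 n ω ^ j n ∂P) ∂P :=
        fun J => (integral_mul_const _ _).symm
      have l2 : ∀ J : Finset (Fin d),
          (∫ ω, ∏ n ∈ J, (((I ω n : ℕ) : ℝ) - 1 / 2) ∂P)
            * ((∏ n ∈ J, ((∫ ω, X 1 n ω ^ j n ∂P) - ∫ ω, X 0 n ω ^ j n ∂P))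
                * ∏ n ∈ Jᶜ, EX n (j n))
          = ∫ ω, (∏ n ∈ J, (((I ω n : ℕ) : ℝ) - 1 / 2))
              * ((∏ n ∈ J, ((∫ ω, X 1 n ω ^ j n ∂P) - ∫ ω, X 0 n ω ^ j n ∂P))
                  * ∏ n ∈ Jᶜ, EX n (j n)) ∂P :=
        fun J => (integral_mul_const _ _).symm
      simp only [l1, l2]
      rw [← integral_finset_sum _ fun J _ => (hIint
        (fun v => (∏ n ∈ J, ((v n : ℕ) : ℝ)) * ∏ n ∈ Jᶜ, (1 - ((v n : ℕ) : ℝ)))).mul_const _,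
        ← integral_finset_sum _ fun J _ => (hIint
        (fun v => ∏ n ∈ J, (((v n : ℕ) : ℝ) - 1 / 2))).mul_const _]
      refine integral_congr_ae (ae_of_all _ fun ω => ?_)
      dsimp only
      have lhs_eq : ∑ J : Finset (Fin d),
          ((∏ n ∈ J, ((I ω n : ℕ) : ℝ)) * ∏ n ∈ Jᶜ, (1 - ((I ω n : ℕ) : ℝ)))
            * ((∏ n ∈ J, ∫ ω, X 1 n ω ^ j n ∂P) * ∏ n ∈ Jᶜ, ∫ ω, X 0 n ω ^ j n ∂P)
          = ∏ k, (((I ω k : ℕ) : ℝ) * ∫ ω, X 1 k ω ^ j k ∂P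
              + (1 - ((I ω k : ℕ) : ℝ)) * ∫ ω, X 0 k ω ^ j k ∂P) := by
        rw [Fintype.prod_add]
        refine Finset.sum_congr rfl fun J _ => ?_
        rw [Finset.prod_mul_distrib, Finset.prod_mul_distrib]
        ring
      have rhs_eq : ∑ J : Finset (Fin d),
          (∏ n ∈ J, (((I ω n : ℕ) : ℝ) - 1 / 2))
            * ((∏ n ∈ J, ((∫ ω, X 1 n ω ^ j n ∂P) - ∫ ω, X 0 n ω ^ j n ∂P))
                * ∏ n ∈ Jᶜ, EX n (j n))
          = ∏ k, ((((I ω k : ℕ) : ℝ) - 1 / 2)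
              * ((∫ ω, X 1 k ω ^ j k ∂P) - ∫ ω, X 0 k ω ^ j k ∂P) + EX k (j k)) := by
        rw [Fintype.prod_add]
        refine Finset.sum_congr rfl fun J _ => ?_
        rw [Finset.prod_mul_distrib]
        ring
      rw [lhs_eq, rhs_eq]
      refine Finset.prod_congr rfl fun k _ => ?_
      rw [hEX k (j k)]
      ring
    -- step 4 : final algebra
    rw [step2, step3]
    rw [← Finset.sum_filter_add_sum_filter_not Finset.univ
      (fun J : Finset (Fin d) => 2 ≤ J.card)]
    have hsecond : ∑ J ∈ Finset.univ.filter (fun J : Finset (Fin d) => ¬ 2 ≤ J.card),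
        (∫ ω, ∏ n ∈ J, (((I ω n : ℕ) : ℝ) - 1 / 2) ∂P)
          * ((∏ n ∈ J, ((∫ ω, X 1 n ω ^ j n ∂P) - ∫ ω, X 0 n ω ^ j n ∂P))
              * ∏ n ∈ Jᶜ, EX n (j n))
        = ∏ k, EX k (j k) := by
      rw [Finset.sum_eq_single_of_mem (∅ : Finset (Fin d)) (by simp)]
      · simp
      · intro J hJ hJne
        have hcard : J.card ≤ 1 := by
          have := (Finset.mem_filter.mp hJ).2
          omega
        have hcard1 : J.card = 1 := by
          rcases Nat.lt_or_ge J.card 1 with h | h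
          · exact absurd (Finset.card_eq_zero.mp (by omega)) hJne
          · omega
        obtain ⟨n0, rfl⟩ := Finset.card_eq_one.mp hcard1
        have ht1 : (∫ ω, ∏ n ∈ ({n0} : Finset (Fin d)), (((I ω n : ℕ) : ℝ) - 1 / 2) ∂P) = 0 := by
          simp only [Finset.prod_singleton]
          rw [integral_sub (hIint (fun v => ((v n0 : ℕ) : ℝ))) (integrable_const _),
            hEI n0, integral_const]
          simp
        rw [ht1, zero_mul]
    have hfirst : ∑ J ∈ Finset.univ.filter (fun J : Finset (Fin d) => 2 ≤ J.card),
        (∫ ω, ∏ n ∈ J, (((I ω n : ℕ) : ℝ) - 1 / 2) ∂P)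
          * ((∏ n ∈ J, ((∫ ω, X 1 n ω ^ j n ∂P) - ∫ ω, X 0 n ω ^ j n ∂P))
              * ∏ n ∈ Jᶜ, EX n (j n))
        = ∑ J ∈ Finset.univ.filter (fun J : Finset (Fin d) => 2 ≤ J.card),
            (θ J * ∏ n ∈ J, (1 - (∫ ω, X 1 n ω ^ j n ∂P) / EX n (j n))) * ∏ k, EX k (j k) := by
      refine Finset.sum_congr rfl fun J hJ => ?_
      have hcard := (Finset.mem_filter.mp hJ).2
      rw [hθ J hcard]
      have hprodsplit : ∏ k, EX k (j k) = (∏ n ∈ J, EX n (j n)) * ∏ n ∈ Jᶜ, EX n (j n) :=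
        (Finset.prod_mul_prod_compl J _).symm
      have hBA : ∏ n ∈ J, ((∫ ω, X 1 n ω ^ j n ∂P) - ∫ ω, X 0 n ω ^ j n ∂P)
          = (-2 : ℝ) ^ J.card
            * ∏ n ∈ J, ((1 - (∫ ω, X 1 n ω ^ j n ∂P) / EX n (j n)) * EX n (j n)) := by
        rw [← Finset.prod_const ((-2 : ℝ)), ← Finset.prod_mul_distrib]
        refine Finset.prod_congr rfl fun n _ => ?_
        rw [sub_mul, one_mul, div_mul_cancel₀ _ (hEpos n).ne']
        rw [hEX n (j n)]
        ring
      rw [hBA, hprodsplit, Finset.prod_mul_distrib]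
      ring
    rw [hfirst, hsecond, ← Finset.sum_mul]
    ring
  -- assemble
  have hmem : ∀ j ∈ Finset.Nat.antidiagonalTuple d m, ∀ k, j k ≤ m := by
    intro j hj k
    have hsum : ∑ k, j k = m := Finset.Nat.mem_antidiagonalTuple.mp hj
    calc j k ≤ ∑ k, j k := Finset.single_le_sum (fun _ _ => Nat.zero_le _) (Finset.mem_univ k)
      _ = m := hsum
  have expand : (fun ω => (∑ k, Y k ω) ^ m)
      = fun ω => ∑ j ∈ Finset.Nat.antidiagonalTuple d m,
          (Nat.multinomial Finset.univ j : ℝ) * ∏ k, Y k ω ^ j k := by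
    funext ω
    rw [Finset.sum_pow_eq_sum_piAntidiag Finset.univ (fun k => Y k ω) m,
      Finset.piAntidiag_univ_fin_eq_antidiagonalTuple]
  calc ∫ ω, (∑ k, Y k ω) ^ m ∂P
      = ∫ ω, ∑ j ∈ Finset.Nat.antidiagonalTuple d m,
          (Nat.multinomial Finset.univ j : ℝ) * ∏ k, Y k ω ^ j k ∂P := by rw [expand]
    _ = ∑ j ∈ Finset.Nat.antidiagonalTuple d m,
          (Nat.multinomial Finset.univ j : ℝ) * ∫ ω, ∏ k, Y k ω ^ j k ∂P := by
        rw [integral_finset_sum _ fun j hj => ((key j (hmem j hj)).1.const_mul _)]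
        exact Finset.sum_congr rfl fun j hj => integral_const_mul _ _
    _ = _ := by
        refine Finset.sum_congr rfl fun j hj => ?_
        rw [(key j (hmem j hj)).2]
        have hcoef : (Nat.multinomial Finset.univ j : ℝ)
            = (m.factorial : ℝ) / ∏ k, ((j k).factorial : ℝ) := by
          have hsum : ∑ k, j k = m := Finset.Nat.mem_antidiagonalTuple.mp hj
          have hspec := Nat.multinomial_spec Finset.univ j
          rw [hsum] at hspec
          have hne : (∏ k, ((j k).factorial : ℝ)) ≠ 0 := by
            refine Finset.prod_ne_zero_iff.mpr fun k _ => ?_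
            exact_mod_cast (Nat.factorial_pos (j k)).ne'
          rw [eq_div_iff hne]
          rw [← Nat.cast_prod, ← Nat.cast_mul, mul_comm, hspec]
        rw [hcoef, mul_assoc]
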